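/- arXiv:1209.6338 — 4 statements merged into one kernel-verified Lean document; each statement's English description precedes it below -/
import Mathlib

section
/- As Λ → +∞, B_Λ⁰ = (2/(3π)) ln Λ - 5/(9π) + (2/(3π)) ln 2 + O(Λ⁻²). In particular B_Λ⁰ - (2/(3π)) ln Λ converges to (2 ln 2)/(3π) - 5/(9π). -/
open Real Filter

/-- The constant `B_Λ⁰ = (1/π) ∫₀^{Λ/√(1+Λ²)} (z² - z⁴/3)/(1 - z²) dz`. -/
noncomputable def BLambda (Λ : ℝ) : ℝ :=
  (1 / π) * ∫ z in (0 : ℝ)..(Λ / Real.sqrt (1 + Λ ^ 2)), (z ^ 2 - z ^ 4 / 3) / (1 - z ^ 2)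

set_option maxHeartbeats 1000000

lemma integral_eq (t : ℝ) (ht0 : 0 ≤ t) (ht1 : t < 1) :
    (∫ z in (0:ℝ)..t, (z ^ 2 - z ^ 4 / 3) / (1 - z ^ 2))
      = t ^ 3 / 9 - 2 * t / 3 + (1 / 3) * (Real.log (1 + t) - Real.log (1 - t)) := by
  have key : ∀ z ∈ Set.uIcc (0:ℝ) t,
      HasDerivAt (fun z => z ^ 3 / 9 - 2 * z / 3
          + (1/3) * (Real.log (1 + z) - Real.log (1 - z)))
        ((z ^ 2 - z ^ 4 / 3) / (1 - z ^ 2)) z := by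
    intro z hz
    rw [Set.uIcc_of_le ht0] at hz
    obtain ⟨hz0, hzt⟩ := hz
    have h1 : (0:ℝ) < 1 + z := by linarith
    have h2 : (0:ℝ) < 1 - z := by linarith
    have d1 : HasDerivAt (fun z : ℝ => Real.log (1 + z)) (1 / (1 + z)) z := by
      have h : HasDerivAt (fun z : ℝ => 1 + z) 1 z := by
        simpa using (hasDerivAt_id z).const_add (1:ℝ)
      simpa using h.log h1.ne'
    have d2 : HasDerivAt (fun z : ℝ => Real.log (1 - z)) (-1 / (1 - z)) z := by
      have h : HasDerivAt (fun z : ℝ => 1 - z) (-1) z := by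
        simpa using (hasDerivAt_id z).const_sub (1:ℝ)
      simpa using h.log h2.ne'
    have d3 : HasDerivAt (fun z : ℝ => z ^ 3 / 9) (z ^ 2 / 3) z := by
      have := (hasDerivAt_pow 3 z).div_const (9:ℝ)
      refine this.congr_deriv ?_
      norm_num
      ring
    have d4 : HasDerivAt (fun z : ℝ => 2 * z / 3) (2 / 3) z := by
      have := ((hasDerivAt_id z).const_mul (2:ℝ)).div_const (3:ℝ)
      simpa using this
    have := (d3.sub d4).add (((d1.sub d2).const_mul (1/3:ℝ)))
    refine this.congr_deriv ?_
    have hz2 : (1:ℝ) - z ^ 2 ≠ 0 := by nlinarith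
    field_simp
    ring
  have hint : IntervalIntegrable (fun z => (z ^ 2 - z ^ 4 / 3) / (1 - z ^ 2))
      MeasureTheory.volume 0 t := by
    apply ContinuousOn.intervalIntegrable
    apply ContinuousOn.div (by fun_prop) (by fun_prop)
    intro z hz
    rw [Set.uIcc_of_le ht0] at hz
    nlinarith [hz.1, hz.2]
  rw [intervalIntegral.integral_eq_sub_of_hasDerivAt key hint]
  norm_num

lemma BLambda_eq (Λ : ℝ) (hΛ : 0 < Λ) :
    BLambda Λ = (1/π) * ((Λ / Real.sqrt (1+Λ^2)) ^ 3 / 9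
      - 2 * (Λ / Real.sqrt (1+Λ^2)) / 3
      + (2/3) * Real.log (1 + Λ / Real.sqrt (1+Λ^2)) + (1/3) * Real.log (1 + Λ^2)) := by
  set s := Real.sqrt (1 + Λ^2) with hs
  have hpos : (0:ℝ) < 1 + Λ^2 := by positivity
  have hs0 : 0 < s := Real.sqrt_pos.mpr hpos
  have hs2 : s ^ 2 = 1 + Λ^2 := Real.sq_sqrt hpos.le
  set t := Λ / s with htdef
  have ht0 : 0 ≤ t := by positivity
  have hΛs : Λ < s := by nlinarith
  have ht1 : t < 1 := (div_lt_one hs0).mpr hΛs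
  have h1t : 0 < 1 - t := by linarith
  have h1t' : 0 < 1 + t := by linarith
  -- (1-t)(1+t)(1+Λ²)=1
  have hprod : (1 - t) * ((1 + t) * (1 + Λ^2)) = 1 := by
    have ht2 : t ^ 2 = Λ ^ 2 / (1 + Λ^2) := by
      rw [htdef, div_pow, hs2]
    calc (1 - t) * ((1 + t) * (1 + Λ^2)) = (1 - t^2) * (1 + Λ^2) := by ring
      _ = 1 := by rw [ht2]; field_simp; ring
  have hlog : Real.log (1 - t) = -(Real.log (1 + t) + Real.log (1 + Λ^2)) := by
    have h6 : (1 - t) = ((1 + t) * (1 + Λ^2))⁻¹ := by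
      exact eq_inv_of_mul_eq_one_left hprod
    rw [h6, Real.log_inv, Real.log_mul (by positivity) (by positivity)]
  rw [BLambda, integral_eq t ht0 ht1, hlog]
  ring

lemma expand_aux (T L U LG : ℝ) :
    (1/π) * (T + (2/3) * L + (1/3) * (2 * LG + U))
      - ((2 / (3 * π)) * LG - 5 / (9 * π) + (2 / (3 * π)) * Real.log 2)
    = (1/π) * ((T + 5/9) - (2/3) * (Real.log 2 - L) + (1/3) * U) := by
  have hπ : π ≠ 0 := Real.pi_ne_zero
  field_simp
  ring

lemma BLambda_bound (Λ : ℝ) (hΛ : 1 ≤ Λ) :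
    |BLambda Λ - ((2 / (3 * π)) * Real.log Λ - 5 / (9 * π) + (2 / (3 * π)) * Real.log 2)|
      ≤ |Λ⁻¹ ^ 2| := by
  have hΛ0 : (0:ℝ) < Λ := by linarith
  set s := Real.sqrt (1 + Λ^2) with hs
  have hpos : (0:ℝ) < 1 + Λ^2 := by positivity
  have hs0 : 0 < s := Real.sqrt_pos.mpr hpos
  have hs2 : s ^ 2 = 1 + Λ^2 := Real.sq_sqrt hpos.le
  set t := Λ / s with htdef
  set u := Λ⁻¹ ^ 2 with hudef
  clear_value s t u
  have hu0 : 0 < u := by rw [hudef]; positivity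
  have hu1 : u ≤ 1 := by
    rw [hudef]
    have : Λ⁻¹ ≤ 1 := by
      rw [inv_le_one_iff₀]; right; exact hΛ
    nlinarith [inv_nonneg.mpr hΛ0.le]
  have ht0 : 0 ≤ t := by rw [htdef]; positivity
  have hΛs : Λ < s := by nlinarith
  have ht1 : t < 1 := htdef ▸ (div_lt_one hs0).mpr hΛs
  -- 1 - t ≤ u/2
  have hkey : 1 - t ≤ u / 2 := by
    have h1 : (2*Λ^2 - 1) * s ≤ 2*Λ^3 := by
      nlinarith [hs2, hs0, hΛ, sq_nonneg Λ, mul_pos hs0 hs0]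
    have h2 : 1 - u/2 ≤ t := by
      rw [htdef, le_div_iff₀ hs0]
      have he : (1 - u/2) * s = ((2*Λ^2-1)*s)/(2*Λ^2) := by
        rw [hudef]; field_simp
      rw [he, div_le_iff₀ (by positivity : (0:ℝ) < 2*Λ^2)]
      nlinarith [h1]
    linarith
  -- log(1+Λ²) = 2 log Λ + log(1+u)
  have hlogsplit : Real.log (1 + Λ^2) = 2 * Real.log Λ + Real.log (1 + u) := by
    have h1 : (1:ℝ) + Λ^2 = Λ^2 * (1 + u) := by
      rw [hudef]; field_simp; ring
    rw [h1, Real.log_mul (by positivity) (by positivity), Real.log_pow]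
    push_cast; ring
  have hlogu0 : 0 ≤ Real.log (1 + u) := Real.log_nonneg (by linarith)
  have hlogu : Real.log (1 + u) ≤ u := by
    have := Real.log_le_sub_one_of_pos (x := 1 + u) (by linarith)
    linarith
  have hlogt0 : Real.log (1 + t) ≤ Real.log 2 :=
    Real.log_le_log (by linarith) (by linarith)
  have hlogt : Real.log 2 - Real.log (1 + t) ≤ 1 - t := by
    have h2 : Real.log 2 - Real.log (1 + t) = Real.log (2 / (1 + t)) := by
      rw [Real.log_div (by norm_num) (by positivity)]
    have h3 := Real.log_le_sub_one_of_pos (x := 2 / (1 + t)) (by positivity)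
    rw [← h2] at h3
    have h5 : 2 / (1 + t) ≤ 2 - t := by
      rw [div_le_iff₀ (by linarith : (0:ℝ) < 1 + t)]
      nlinarith [ht0, ht1]
    linarith
  have hh0 : 0 ≤ t ^ 3 / 9 - 2 * t / 3 + 5 / 9 := by
    nlinarith [mul_nonneg (by linarith : (0:ℝ) ≤ 1 - t) (by nlinarith : (0:ℝ) ≤ 5 - t - t^2)]
  have hh1 : t ^ 3 / 9 - 2 * t / 3 + 5 / 9 ≤ 5 * (1 - t) / 9 := by
    nlinarith [mul_nonneg (by linarith : (0:ℝ) ≤ 1 - t) (by nlinarith : (0:ℝ) ≤ t + t^2)]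
  have hπ : (1:ℝ) < π := by
    have := Real.pi_gt_three; linarith
  have hπ0 : (0:ℝ) < π := by linarith
  rw [BLambda_eq Λ hΛ0, ← hs, ← htdef, hlogsplit]
  have hX : BLambda Λ = BLambda Λ := rfl
  rw [expand_aux (t ^ 3 / 9 - 2 * t / 3) (Real.log (1 + t)) (Real.log (1 + u)) (Real.log Λ), abs_mul, abs_of_pos (by positivity : (0:ℝ) < 1/π), abs_of_pos hu0]
  have hXle : |(t ^ 3 / 9 - 2 * t / 3 + 5 / 9) - (2/3) * (Real.log 2 - Real.log (1 + t))
      + (1/3) * Real.log (1 + u)| ≤ u := by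
    rw [abs_le]
    constructor <;> nlinarith
  calc (1/π) * |(t ^ 3 / 9 - 2 * t / 3 + 5 / 9) - (2/3) * (Real.log 2 - Real.log (1 + t))
      + (1/3) * Real.log (1 + u)| ≤ (1/π) * u := by
        apply mul_le_mul_of_nonneg_left hXle (by positivity)
    _ ≤ u := by
        rw [div_mul_eq_mul_div, one_mul, div_le_iff₀ hπ0]
        nlinarith

/-- As `Λ → ∞`, `B_Λ⁰ = (2/(3π)) ln Λ - 5/(9π) + (2/(3π)) ln 2 + O(Λ⁻²)`; in particular
`B_Λ⁰ - (2/(3π)) ln Λ → (2 ln 2)/(3π) - 5/(9π)`. -/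
theorem BLambda_asymptotics :
    (fun Λ : ℝ =>
        BLambda Λ - ((2 / (3 * π)) * Real.log Λ - 5 / (9 * π) + (2 / (3 * π)) * Real.log 2))
      =O[atTop] (fun Λ : ℝ => Λ⁻¹ ^ 2) ∧
    Tendsto (fun Λ : ℝ => BLambda Λ - (2 / (3 * π)) * Real.log Λ) atTop
      (nhds ((2 * Real.log 2) / (3 * π) - 5 / (9 * π))) := by
  have hO : (fun Λ : ℝ =>
        BLambda Λ - ((2 / (3 * π)) * Real.log Λ - 5 / (9 * π) + (2 / (3 * π)) * Real.log 2))
      =O[atTop] (fun Λ : ℝ => Λ⁻¹ ^ 2) := by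
    apply Asymptotics.IsBigO.of_bound 1
    filter_upwards [eventually_ge_atTop (1:ℝ)] with Λ hΛ
    rw [one_mul, Real.norm_eq_abs, Real.norm_eq_abs]
    exact BLambda_bound Λ hΛ
  refine ⟨hO, ?_⟩
  have h0 : Tendsto (fun Λ : ℝ =>
      BLambda Λ - ((2 / (3 * π)) * Real.log Λ - 5 / (9 * π) + (2 / (3 * π)) * Real.log 2))
      atTop (nhds 0) := by
    apply hO.trans_tendsto
    have : Tendsto (fun Λ : ℝ => Λ⁻¹) atTop (nhds 0) := tendsto_inv_atTop_zero
    simpa using (this.pow 2)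
  have := h0.add_const ((2 / (3 * π)) * Real.log 2 - 5 / (9 * π))
  rw [zero_add] at this
  convert this using 2 with Λ
  · ring
  · ring
end

section
/- The two expressions for the Uehling multiplier agree: for every k ∈ ℝ³ with k ≠ 0, (|k|²/(4π)) ∫₀¹ (z² - z⁴/3)/(1 + |k|²(1-z²)/4) dz = (12 - 5|k|²)/(9π|k|²) + (√(4+|k|²)/(3π|k|³))(|k|² - 2) ln((√(4+|k|²)+|k|)/(√(4+|k|²)-|k|)). -/
open Real

/-- The two expressions for the Uehling multiplier agree for `k ≠ 0`. -/
theorem uehling_closed_form (k : EuclideanSpace ℝ (Fin 3)) (hk : k ≠ 0) :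
    (‖k‖ ^ 2 / (4 * π)) *
        (∫ z in (0 : ℝ)..1, (z ^ 2 - z ^ 4 / 3) / (1 + ‖k‖ ^ 2 * (1 - z ^ 2) / 4)) =
      (12 - 5 * ‖k‖ ^ 2) / (9 * π * ‖k‖ ^ 2) +
        (Real.sqrt (4 + ‖k‖ ^ 2) / (3 * π * ‖k‖ ^ 3)) * (‖k‖ ^ 2 - 2) *
          Real.log ((Real.sqrt (4 + ‖k‖ ^ 2) + ‖k‖) / (Real.sqrt (4 + ‖k‖ ^ 2) - ‖k‖)) := by
  have hπ : (π : ℝ) ≠ 0 := Real.pi_ne_zero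
  set t := ‖k‖ with htdef
  have ht : 0 < t := norm_pos_iff.mpr hk
  set s := Real.sqrt (4 + t ^ 2) with hsdef
  have hs2 : s ^ 2 = 4 + t ^ 2 := Real.sq_sqrt (by positivity)
  have hst : t < s := by nlinarith [Real.sqrt_nonneg (4 + t ^ 2), hs2]
  have hs : 0 < s := lt_trans ht hst
  set b := s / t with hbdef
  have hb : 1 < b := (one_lt_div ht).mpr hst
  have hb2 : b ^ 2 = (4 + t ^ 2) / t ^ 2 := by rw [hbdef, div_pow, hs2]
  have hbt : t ^ 2 * b ^ 2 = 4 + t ^ 2 := by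
    rw [hb2]; field_simp
  set F : ℝ → ℝ := fun z => (4 / (3 * t ^ 2)) *
      (z ^ 3 / 3 + (b ^ 2 - 3) * z -
        (b * (b ^ 2 - 3) / 2) * (Real.log (b + z) - Real.log (b - z))) with hFdef
  have key : ∀ z ∈ Set.uIcc (0 : ℝ) 1, HasDerivAt F
      ((z ^ 2 - z ^ 4 / 3) / (1 + t ^ 2 * (1 - z ^ 2) / 4)) z := by
    intro z hz
    rw [Set.uIcc_of_le (by norm_num : (0:ℝ) ≤ 1)] at hz
    obtain ⟨hz0, hz1⟩ := hz
    have hbz1 : 0 < b + z := by linarith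
    have hbz2 : 0 < b - z := by linarith
    have h1 : HasDerivAt (fun z : ℝ => Real.log (b + z)) (1 / (b + z)) z := by
      simpa using (HasDerivAt.log ((hasDerivAt_id z).const_add b) (ne_of_gt hbz1))
    have h2 : HasDerivAt (fun z : ℝ => Real.log (b - z)) (-1 / (b - z)) z := by
      have : HasDerivAt (fun z : ℝ => b - z) (-1) z := by
        simpa using ((hasDerivAt_id z).const_sub b)
      simpa using (HasDerivAt.log this (ne_of_gt hbz2))
    have h3 : HasDerivAt (fun z : ℝ => z ^ 3 / 3) (z ^ 2) z := by
      have := (hasDerivAt_pow 3 z).div_const 3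
      simpa using this
    have h4 : HasDerivAt (fun z : ℝ => (b ^ 2 - 3) * z) (b ^ 2 - 3) z := by
      simpa using (hasDerivAt_id z).const_mul (b ^ 2 - 3)
    have hD : HasDerivAt F ((4 / (3 * t ^ 2)) *
        (z ^ 2 + (b ^ 2 - 3) -
          (b * (b ^ 2 - 3) / 2) * (1 / (b + z) - -1 / (b - z)))) z := by
      exact ((h3.add h4).sub ((h1.sub h2).const_mul (b * (b ^ 2 - 3) / 2))).const_mul _
    convert hD using 1
    have hrw : 1 + t ^ 2 * (1 - z ^ 2) / 4 = ((b + z) * (b - z)) * t ^ 2 / 4 := by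
      field_simp
      linear_combination -hbt
    rw [hrw]
    field_simp
    ring
  have hcont : IntervalIntegrable
      (fun z : ℝ => (z ^ 2 - z ^ 4 / 3) / (1 + t ^ 2 * (1 - z ^ 2) / 4))
      MeasureTheory.volume 0 1 := by
    apply ContinuousOn.intervalIntegrable
    apply ContinuousOn.div (by fun_prop) (by fun_prop)
    intro z hz
    rw [Set.uIcc_of_le (by norm_num : (0:ℝ) ≤ 1)] at hz
    obtain ⟨hz0, hz1⟩ := hz
    have h0 : (0:ℝ) ≤ t ^ 2 * (1 - z ^ 2) :=
      mul_nonneg (sq_nonneg t) (by nlinarith)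
    positivity
  rw [intervalIntegral.integral_eq_sub_of_hasDerivAt key hcont]
  have hF0 : F 0 = 0 := by simp [hFdef]
  have hlog : Real.log (b + 1) - Real.log (b - 1) = Real.log ((s + t) / (s - t)) := by
    rw [← Real.log_div (by linarith : b + 1 ≠ 0) (ne_of_gt (by linarith : (0:ℝ) < b - 1))]
    congr 1
    rw [div_eq_div_iff (by linarith : (0:ℝ) < b - 1).ne' (by linarith : (0:ℝ) < s - t).ne']
    rw [hbdef]
    field_simp
  have he : b ^ 2 - 3 = (4 - 2 * t ^ 2) / t ^ 2 := by
    rw [hb2]; field_simp; ring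
  rw [hF0, hFdef]
  simp only
  rw [hlog, he, hbdef]
  field_simp
  ring
end

section
/- For each fixed u ∈ (0,1) and k ∈ ℝ³, the quantity -Σⱼ₌₀² cⱼ log(mⱼ² + u(1-u)|k|²) is a strictly decreasing function of |k|² when the cⱼ satisfy the Pauli-Villars conditions; consequently M(k) ≤ M(0) for all k ∈ ℝ³. -/
open Real Set

/-- The Pauli–Villars multiplier `M(k)`. -/
noncomputable def pvM (c m : Fin 3 → ℝ) (k : EuclideanSpace ℝ (Fin 3)) : ℝ :=
  -(2 / π) * ∑ j : Fin 3, c j *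
    ∫ u in (0 : ℝ)..1, u * (1 - u) * Real.log ((m j) ^ 2 + u * (1 - u) * ‖k‖ ^ 2)

theorem pvM_monotonicity_and_bound (c m : Fin 3 → ℝ)
    (hc0 : c 0 = 1)
    (hc1 : c 1 = ((m 0) ^ 2 - (m 2) ^ 2) / ((m 2) ^ 2 - (m 1) ^ 2))
    (hc2 : c 2 = ((m 1) ^ 2 - (m 0) ^ 2) / ((m 2) ^ 2 - (m 1) ^ 2))
    (hm0 : 0 < m 0) (hm01 : m 0 < m 1) (hm12 : m 1 < m 2) :
    (∀ u : ℝ, u ∈ Ioo (0 : ℝ) 1 →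
      StrictAntiOn (fun t : ℝ =>
        -∑ j : Fin 3, c j * Real.log ((m j) ^ 2 + u * (1 - u) * t)) (Ici 0)) ∧
    (∀ k : EuclideanSpace ℝ (Fin 3), pvM c m k ≤ pvM c m 0) := by
  have hm1 : (0:ℝ) < m 1 := hm0.trans hm01
  have hm2 : (0:ℝ) < m 2 := hm1.trans hm12
  have hD : (0:ℝ) < (m 2)^2 - (m 1)^2 := by nlinarith
  have hd : ∀ (j : Fin 3) (s : ℝ), 0 ≤ s → 0 < (m j)^2 + s := by
    intro j s hs
    have : 0 < m j := by fin_cases j <;> assumption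
    nlinarith
  have key : ∀ s : ℝ, 0 ≤ s →
      0 < c 0 / ((m 0)^2 + s) + c 1 / ((m 1)^2 + s) + c 2 / ((m 2)^2 + s) := by
    intro s hs
    have h0 := hd 0 s hs; have h1 := hd 1 s hs; have h2 := hd 2 s hs
    have e : c 0 / ((m 0)^2 + s) + c 1 / ((m 1)^2 + s) + c 2 / ((m 2)^2 + s)
        = (((m 0)^2 - (m 1)^2) * (((m 1)^2 - (m 2)^2) * ((m 2)^2 - (m 0)^2)))
          / ((((m 2)^2 - (m 1)^2) * ((m 0)^2 + s)) * (((m 1)^2 + s) * ((m 2)^2 + s))) := by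
      rw [hc0, hc1, hc2]
      field_simp
      ring
    rw [e]
    apply div_pos
    · exact mul_pos_of_neg_of_neg (by nlinarith)
        (mul_neg_of_neg_of_pos (by nlinarith) (by nlinarith))
    · positivity
  -- Part 1
  have part1 : ∀ u : ℝ, u ∈ Ioo (0 : ℝ) 1 →
      StrictAntiOn (fun t : ℝ =>
        -∑ j : Fin 3, c j * Real.log ((m j) ^ 2 + u * (1 - u) * t)) (Ici 0) := by
    intro u hu
    obtain ⟨hu0, hu1⟩ := hu
    have hap : 0 < u * (1 - u) := by nlinarith
    have hfun : (fun t : ℝ => -∑ j : Fin 3, c j * Real.log ((m j) ^ 2 + u * (1 - u) * t))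
        = fun t : ℝ => -(c 0 * Real.log ((m 0) ^ 2 + u * (1 - u) * t)
            + c 1 * Real.log ((m 1) ^ 2 + u * (1 - u) * t)
            + c 2 * Real.log ((m 2) ^ 2 + u * (1 - u) * t)) := by
      funext t; rw [Fin.sum_univ_three]
    rw [hfun]
    apply strictAntiOn_of_deriv_neg (convex_Ici 0)
    · have hcont : ∀ j : Fin 3, ContinuousOn
          (fun t : ℝ => Real.log ((m j) ^ 2 + u * (1 - u) * t)) (Ici 0) := by
        intro j
        apply ContinuousOn.log
        · fun_prop
        · intro t ht
          exact (hd j (u * (1 - u) * t) (mul_nonneg hap.le ht)).ne'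
      exact (((continuousOn_const.mul (hcont 0)).add
        (continuousOn_const.mul (hcont 1))).add (continuousOn_const.mul (hcont 2))).neg
    · intro t ht
      rw [interior_Ici] at ht
      have htpos : (0:ℝ) < t := ht
      have hs : 0 ≤ u * (1 - u) * t := by positivity
      have hder : ∀ j : Fin 3, HasDerivAt
          (fun t : ℝ => Real.log ((m j) ^ 2 + u * (1 - u) * t))
          (u * (1 - u) / ((m j) ^ 2 + u * (1 - u) * t)) t := by
        intro j
        have h1 : HasDerivAt (fun t : ℝ => (m j) ^ 2 + u * (1 - u) * t) (u * (1 - u)) t := by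
          exact (((hasDerivAt_id t).const_mul (u * (1-u))).const_add ((m j)^2)).congr_deriv (mul_one _)
        exact h1.log (hd j _ hs).ne'
      have hF : HasDerivAt
          (fun t : ℝ => -(c 0 * Real.log ((m 0) ^ 2 + u * (1 - u) * t)
            + c 1 * Real.log ((m 1) ^ 2 + u * (1 - u) * t)
            + c 2 * Real.log ((m 2) ^ 2 + u * (1 - u) * t)))
          (-(c 0 * (u * (1 - u) / ((m 0) ^ 2 + u * (1 - u) * t))
            + c 1 * (u * (1 - u) / ((m 1) ^ 2 + u * (1 - u) * t))
            + c 2 * (u * (1 - u) / ((m 2) ^ 2 + u * (1 - u) * t)))) t :=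
        ((((hder 0).const_mul (c 0)).add ((hder 1).const_mul (c 1))).add
          ((hder 2).const_mul (c 2))).neg
      rw [hF.deriv]
      have hk := key (u * (1 - u) * t) hs
      have hmul : 0 < (u * (1 - u)) *
          (c 0 / ((m 0)^2 + u * (1 - u) * t) + c 1 / ((m 1)^2 + u * (1 - u) * t)
            + c 2 / ((m 2)^2 + u * (1 - u) * t)) := mul_pos hap hk
      have e2 : (u * (1 - u)) *
          (c 0 / ((m 0)^2 + u * (1 - u) * t) + c 1 / ((m 1)^2 + u * (1 - u) * t)
            + c 2 / ((m 2)^2 + u * (1 - u) * t))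
          = c 0 * (u * (1 - u) / ((m 0) ^ 2 + u * (1 - u) * t))
            + c 1 * (u * (1 - u) / ((m 1) ^ 2 + u * (1 - u) * t))
            + c 2 * (u * (1 - u) / ((m 2) ^ 2 + u * (1 - u) * t)) := by ring
      rw [e2] at hmul
      linarith
  refine ⟨part1, ?_⟩
  -- Part 2
  intro k
  unfold pvM
  have hπ : (0:ℝ) < 2 / π := by positivity
  set t := ‖k‖ ^ 2 with htdef
  have ht : 0 ≤ t := by positivity
  have hnorm0 : ‖(0 : EuclideanSpace ℝ (Fin 3))‖ = 0 := norm_zero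
  rw [hnorm0]
  -- reduce to comparing the sums
  have hInt : ∀ (j : Fin 3) (t' : ℝ), 0 ≤ t' → IntervalIntegrable
      (fun u : ℝ => c j * (u * (1 - u) * Real.log ((m j) ^ 2 + u * (1 - u) * t')))
      MeasureTheory.volume 0 1 := by
    intro j t' ht'
    apply ContinuousOn.intervalIntegrable
    apply ContinuousOn.mul continuousOn_const
    apply ContinuousOn.mul (by fun_prop)
    apply ContinuousOn.log (by fun_prop)
    intro u hu
    rw [uIcc_of_le zero_le_one] at hu
    obtain ⟨hu0, hu1⟩ := hu
    have : 0 ≤ u * (1 - u) * t' := by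
      apply mul_nonneg (by nlinarith) ht'
    exact (hd j _ this).ne'
  have hsum : ∀ t' : ℝ, 0 ≤ t' →
      (∑ j : Fin 3, c j * ∫ u in (0:ℝ)..1, u * (1 - u) * Real.log ((m j) ^ 2 + u * (1 - u) * t'))
      = ∫ u in (0:ℝ)..1, ∑ j : Fin 3,
          c j * (u * (1 - u) * Real.log ((m j) ^ 2 + u * (1 - u) * t')) := by
    intro t' ht'
    rw [intervalIntegral.integral_finset_sum (fun j _ => hInt j t' ht')]
    apply Finset.sum_congr rfl
    intro j _
    rw [← intervalIntegral.integral_const_mul]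
  have hS : (∑ j : Fin 3, c j *
        ∫ u in (0:ℝ)..1, u * (1 - u) * Real.log ((m j) ^ 2 + u * (1 - u) * (0:ℝ) ^ 2))
      ≤ ∑ j : Fin 3, c j *
        ∫ u in (0:ℝ)..1, u * (1 - u) * Real.log ((m j) ^ 2 + u * (1 - u) * t) := by
    have h00 : ((0:ℝ) ^ 2) = (0:ℝ) := by norm_num
    rw [h00, hsum 0 le_rfl, hsum t ht]
    have I0 : IntervalIntegrable (fun u : ℝ => ∑ j : Fin 3,
        c j * (u * (1 - u) * Real.log ((m j) ^ 2 + u * (1 - u) * (0:ℝ))))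
        MeasureTheory.volume 0 1 := by
      simpa [Finset.sum_fn] using IntervalIntegrable.sum Finset.univ (fun j _ => hInt j 0 le_rfl)
    have It : IntervalIntegrable (fun u : ℝ => ∑ j : Fin 3,
        c j * (u * (1 - u) * Real.log ((m j) ^ 2 + u * (1 - u) * t)))
        MeasureTheory.volume 0 1 := by
      simpa [Finset.sum_fn] using IntervalIntegrable.sum Finset.univ (fun j _ => hInt j t ht)
    apply intervalIntegral.integral_mono_on zero_le_one I0 It
    intro u hu
    obtain ⟨hu0, hu1⟩ := hu
    have e : ∀ t' : ℝ, (∑ j : Fin 3,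
        c j * (u * (1 - u) * Real.log ((m j) ^ 2 + u * (1 - u) * t')))
        = (u * (1 - u)) * ∑ j : Fin 3, c j * Real.log ((m j) ^ 2 + u * (1 - u) * t') := by
      intro t'
      rw [Finset.mul_sum]
      apply Finset.sum_congr rfl
      intro j _
      ring
    rw [e 0, e t]
    rcases eq_or_lt_of_le hu0 with h | h
    · simp [← h]
    rcases eq_or_lt_of_le hu1 with h' | h'
    · simp [h']
    have huI : u ∈ Ioo (0:ℝ) 1 := ⟨h, h'⟩
    apply mul_le_mul_of_nonneg_left ?_ (by nlinarith)
    rcases eq_or_lt_of_le ht with h0 | h0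
    · rw [← h0]
    have := part1 u huI (self_mem_Ici) (mem_Ici.mpr ht) h0
    simp only [neg_lt_neg_iff] at this
    linarith
  nlinarith [mul_le_mul_of_nonneg_left hS hπ.le]
end

section
/- With f(t) = -Σⱼ₌₀² cⱼ log(mⱼ² + t) under the Pauli-Villars conditions, one has f'(t) = -Σⱼ cⱼ/(mⱼ² + t) < 0 for all t ≥ 0. -/
open Real Set

/-- Under the Pauli–Villars conditions, `f(t) = -Σⱼ cⱼ log(mⱼ² + t)` has derivative
`-Σⱼ cⱼ/(mⱼ² + t)`, which is strictly negative for `t ≥ 0`. -/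
theorem pauliVillars_deriv_neg (c m : Fin 3 → ℝ)
    (hc0 : c 0 = 1)
    (hc1 : c 1 = ((m 0) ^ 2 - (m 2) ^ 2) / ((m 2) ^ 2 - (m 1) ^ 2))
    (hc2 : c 2 = ((m 1) ^ 2 - (m 0) ^ 2) / ((m 2) ^ 2 - (m 1) ^ 2))
    (hm0 : 0 < m 0) (hm01 : m 0 < m 1) (hm12 : m 1 < m 2) (t : ℝ) (ht : 0 ≤ t) :
    HasDerivAt (fun s : ℝ => -∑ j : Fin 3, c j * Real.log ((m j) ^ 2 + s))
      (-∑ j : Fin 3, c j / ((m j) ^ 2 + t)) t ∧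
    -∑ j : Fin 3, c j / ((m j) ^ 2 + t) < 0 := by
  have hpos : ∀ j : Fin 3, 0 < (m j) ^ 2 + t := fun j => by
    have hj : 0 < m j := by
      fin_cases j
      · exact hm0
      · exact hm0.trans hm01
      · exact (hm0.trans hm01).trans hm12
    positivity
  constructor
  · apply HasDerivAt.neg
    apply HasDerivAt.fun_sum
    intro j _
    have h1 : HasDerivAt (fun s : ℝ => (m j) ^ 2 + s) 1 t :=
      (hasDerivAt_id t).const_add _
    have h2 : HasDerivAt (fun s : ℝ => Real.log ((m j) ^ 2 + s))
        (1 / ((m j) ^ 2 + t)) t := by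
      simpa using (h1.log (hpos j).ne')
    simpa [mul_one_div, div_eq_mul_inv] using h2.const_mul (c j)
  · have ha := hpos 0
    have hb := hpos 1
    have hC := hpos 2
    have h10 : 0 < (m 1)^2 - (m 0)^2 := by nlinarith
    have h20 : 0 < (m 2)^2 - (m 0)^2 := by nlinarith
    have h21 : 0 < (m 2)^2 - (m 1)^2 := by nlinarith
    have hsum : ∑ j : Fin 3, c j / ((m j) ^ 2 + t) =
        (((m 1)^2-(m 0)^2)*((m 2)^2-(m 0)^2)*((m 2)^2-(m 1)^2)) /
        (((m 2)^2-(m 1)^2)*(((m 0)^2+t)*((m 1)^2+t)*((m 2)^2+t))) := by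
      rw [Fin.sum_univ_three, hc0, hc1, hc2]
      field_simp
      ring
    rw [hsum]
    have hnum : 0 < ((m 1)^2-(m 0)^2)*((m 2)^2-(m 0)^2)*((m 2)^2-(m 1)^2) :=
      mul_pos (mul_pos h10 h20) h21
    have hden : 0 < ((m 2)^2-(m 1)^2)*(((m 0)^2+t)*((m 1)^2+t)*((m 2)^2+t)) :=
      mul_pos h21 (mul_pos (mul_pos ha hb) hC)
    linarith [div_pos hnum hden]
end
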